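/- Let G be a connected simple graph containing no subgraph isomorphic to T1, T2, or any cycle of length ≥ 4, and suppose F ⊆ E(G) contains exactly one edge from each triangle of G and nothing else. Then G − F (deleting the edges F) is a caterpillar. -/

import Mathlib

/-- The spider `T1 = S(2,2,2)`. -/
def spiderT1 : SimpleGraph (Fin 7) :=
  SimpleGraph.fromEdgeSet {s(0, 1), s(0, 2), s(0, 3), s(1, 4), s(2, 5), s(3, 6)}

/-- The net graph `T2`: a triangle with a pendant leaf at each vertex. -/
def netT2 : SimpleGraph (Fin 6) :=
  SimpleGraph.fromEdgeSet {s(0, 1), s(1, 2), s(0, 2), s(0, 3), s(1, 4), s(2, 5)}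

/-- `G` contains a subgraph isomorphic to `H`. -/
def ContainsSub {α β : Type*} (H : SimpleGraph α) (G : SimpleGraph β) : Prop :=
  ∃ f : α → β, Function.Injective f ∧ ∀ u v, H.Adj u v → G.Adj (f u) (f v)

/-- `G` is a caterpillar: a tree such that deleting the degree-1 vertices (those with
exactly one neighbor) leaves a path (possibly empty). -/
def IsCaterpillar {V : Type*} (G : SimpleGraph V) : Prop :=
  G.IsTree ∧ ∃ n : ℕ,
    Nonempty ((G.induce {v : V | ¬ ∃! w : V, G.Adj v w}) ≃g SimpleGraph.pathGraph n)

open SimpleGraph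



private lemma not_acyclic_triangle {V : Type*} {G : SimpleGraph V} {a b c : V}
    (hab : G.Adj a b) (hbc : G.Adj b c) (hca : G.Adj c a) : ¬ G.IsAcyclic := by
  intro h
  have h1 : a ≠ b := hab.ne
  have h2 : b ≠ c := hbc.ne
  have h3 : c ≠ a := hca.ne
  apply h (Walk.cons hab (Walk.cons hbc (Walk.cons hca Walk.nil)))
  simp [Walk.isCycle_def, Walk.isTrail_def, Sym2.eq_iff]
  tauto

private lemma not_acyclic_square {V : Type*} {G : SimpleGraph V} {a b c d : V}
    (hab : G.Adj a b) (hbc : G.Adj b c) (hcd : G.Adj c d) (hda : G.Adj d a)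
    (hac : a ≠ c) (hbd : b ≠ d) : ¬ G.IsAcyclic := by
  intro h
  have h1 : a ≠ b := hab.ne
  have h2 : b ≠ c := hbc.ne
  have h3 : c ≠ d := hcd.ne
  have h4 : d ≠ a := hda.ne
  apply h (Walk.cons hab (Walk.cons hbc (Walk.cons hcd (Walk.cons hda Walk.nil))))
  simp [Walk.isCycle_def, Walk.isTrail_def, Sym2.eq_iff]
  tauto

private lemma getVert_eq_support_getElem {V : Type*} {G : SimpleGraph V} {u v : V}
    (p : G.Walk u v) {n : ℕ} (h : n ≤ p.length) :
    p.getVert n = p.support[n]'(by simp [Walk.length_support, Walk.length_cons]; omega) := by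
  induction p generalizing n with
  | nil =>
    simp only [Walk.length_nil, Nat.le_zero] at h
    subst h; simp [Walk.getVert_zero]
  | cons hadj q ih =>
    cases n with
    | zero => simp [Walk.getVert_zero]
    | succ m =>
      rw [Walk.getVert_cons_succ]
      have hm : m ≤ q.length := by simp [Walk.length_cons] at h; omega
      have : (Walk.cons hadj q).support[m+1]'(by simp [Walk.length_support, Walk.length_cons]; omega)
          = q.support[m]'(by simp [Walk.length_support]; omega) := by
        simp [Walk.support_cons]
      rw [this]
      exact ih (by simpa [Walk.length_cons, Nat.succ_le_succ_iff] using h)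

private lemma cycle_getVert_inj {V : Type*} {G : SimpleGraph V} {v : V} {c : G.Walk v v}
    (hc : c.IsCycle) {i j : ℕ} (hi : i < c.length) (hj : j < c.length)
    (heq : c.getVert i = c.getVert j) : i = j := by
  have hnd : c.support.tail.Nodup := hc.2
  have htl : c.support.tail.length = c.length := by
    simp [List.length_tail, c.length_support]
  have key : ∀ m : ℕ, (hm1 : 1 ≤ m) → (hm2 : m ≤ c.length) →
      c.getVert m = c.support.tail[m-1]'(by omega) := by
    intro m hm1 hm2
    rw [getVert_eq_support_getElem c hm2]
    have h2 := List.getElem_tail (l := c.support) (i := m - 1) (by omega)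
    rw [h2]
    have h3 : m - 1 + 1 = m := by omega
    simp [h3]
  -- wlog i < j
  rcases Nat.lt_trichotomy i j with hij | hij | hij
  · exfalso
    rcases Nat.eq_zero_or_pos i with rfl | hipos
    · have h0 : c.getVert 0 = v := c.getVert_zero
      have hlast : c.getVert c.length = v := c.getVert_length
      have e1 : c.support.tail[j-1]'(by omega) = c.support.tail[c.length-1]'(by omega) := by
        rw [← key j hij hj.le, ← key c.length (by omega) le_rfl, ← heq, h0, hlast]
      have := (List.Nodup.getElem_inj_iff hnd).mp e1
      omega
    · have e1 : c.support.tail[i-1]'(by omega) = c.support.tail[j-1]'(by omega) := by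
        rw [← key i hipos hi.le, ← key j (by omega) hj.le, heq]
      have := (List.Nodup.getElem_inj_iff hnd).mp e1
      omega
  · exact hij
  · exfalso
    rcases Nat.eq_zero_or_pos j with rfl | hjpos
    · have h0 : c.getVert 0 = v := c.getVert_zero
      have hlast : c.getVert c.length = v := c.getVert_length
      have e1 : c.support.tail[i-1]'(by omega) = c.support.tail[c.length-1]'(by omega) := by
        rw [← key i hij hi.le, ← key c.length (by omega) le_rfl, heq, h0, hlast]
      have := (List.Nodup.getElem_inj_iff hnd).mp e1
      omega
    · have e1 : c.support.tail[i-1]'(by omega) = c.support.tail[j-1]'(by omega) := by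
        rw [← key i (by omega) hi.le, ← key j hjpos hj.le, heq]
      have := (List.Nodup.getElem_inj_iff hnd).mp e1
      omega

private lemma exists_low_degree {W : Type*} [Fintype W] [DecidableEq W] (T : SimpleGraph W)
    [DecidableRel T.Adj] (hT : T.IsTree) : ∃ v : W, T.degree v ≤ 1 := by
  by_contra hcon
  push_neg at hcon
  have hsum := T.sum_degrees_eq_twice_card_edges
  have hcard := hT.card_edgeFinset
  have hlb : Fintype.card W * 2 ≤ ∑ v : W, T.degree v := by
    calc Fintype.card W * 2 = ∑ _v : W, 2 := by simp [Finset.sum_const, Finset.card_univ, Nat.mul_comm]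
    _ ≤ ∑ v : W, T.degree v := Finset.sum_le_sum fun v _ => hcon v
  have hpos : 0 < Fintype.card W := Fintype.card_pos_iff.mpr hT.isConnected.nonempty
  omega

private lemma exists_pred {W : Type*} {T : SimpleGraph W} (hc : T.Connected) {v0 u : W} {d : ℕ}
    (h : T.dist v0 u = d + 1) : ∃ u', T.Adj u' u ∧ T.dist v0 u' = d := by
  obtain ⟨p, hp⟩ := hc.exists_walk_length_eq_dist v0 u
  have hne : u ≠ v0 := by rintro rfl; simp [SimpleGraph.dist_self] at h
  obtain ⟨w, hadj, q, hq⟩ := Walk.exists_eq_cons_of_ne hne p.reverse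
  have hlen : q.length = d := by
    have h2 := congrArg Walk.length hq
    simp only [Walk.length_reverse, Walk.length_cons] at h2
    omega
  refine ⟨w, hadj.symm, le_antisymm ?_ ?_⟩
  · calc T.dist v0 w ≤ q.reverse.length := SimpleGraph.dist_le _
    _ = d := by simp [hlen]
  · have htr : T.dist v0 u ≤ T.dist v0 w + T.dist w u := hc.dist_triangle
    have h1 : T.dist w u ≤ 1 := by
      have := SimpleGraph.dist_le (Walk.cons hadj.symm Walk.nil : T.Walk w u)
      simpa using this
    omega

private lemma dist_unique {W : Type*} [Fintype W] [DecidableEq W] {T : SimpleGraph W}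
    [DecidableRel T.Adj] (hT : T.Connected) (hdeg : ∀ v, T.degree v ≤ 2)
    {v0 : W} (hv0 : T.degree v0 ≤ 1) :
    ∀ (d : ℕ) (u w : W), T.dist v0 u = d → T.dist v0 w = d → u = w := by
  intro d
  induction d with
  | zero =>
    intro u w hu hw
    have hu' : u = v0 := by
      rcases SimpleGraph.dist_eq_zero_iff_eq_or_not_reachable.mp hu with h | h
      · exact h.symm
      · exact absurd (hT v0 u) h
    have hw' : w = v0 := by
      rcases SimpleGraph.dist_eq_zero_iff_eq_or_not_reachable.mp hw with h | h
      · exact h.symm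
      · exact absurd (hT v0 w) h
    rw [hu', hw']
  | succ d ih =>
    intro u w hu hw
    by_contra hne
    obtain ⟨u', hu'a, hu'd⟩ := exists_pred hT hu
    obtain ⟨w', hw'a, hw'd⟩ := exists_pred hT hw
    have heq : u' = w' := ih u' w' hu'd hw'd
    subst heq
    cases d with
    | zero =>
      have : u' = v0 := by
        rcases SimpleGraph.dist_eq_zero_iff_eq_or_not_reachable.mp hu'd with h | h
        · exact h.symm
        · exact absurd (hT v0 u') h
      subst this
      have h2 : 2 ≤ T.degree u' := by
        exact Finset.one_lt_card_iff.mpr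
          ⟨u, w, by simpa using hu'a, by simpa using hw'a, hne⟩
      omega
    | succ e =>
      obtain ⟨u'', hu''a, hu''d⟩ := exists_pred hT hu'd
      have hne1 : u'' ≠ u := by
        intro h; rw [h] at hu''d; omega
      have hne2 : u'' ≠ w := by
        intro h; rw [h] at hu''d; omega
      have h3 : 3 ≤ T.degree u' := by
        exact Finset.two_lt_card_iff.mpr
          ⟨u, w, u'', by simpa using hu'a, by simpa using hw'a,
            by simpa using hu''a.symm, hne, hne1.symm, hne2.symm⟩
      have := hdeg u'
      omega

private lemma path_iso {W : Type*} [Fintype W] [DecidableEq W] (T : SimpleGraph W)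
    [DecidableRel T.Adj] (hT : T.IsTree) (hdeg : ∀ v, T.degree v ≤ 2) :
    Nonempty (T ≃g pathGraph (Fintype.card W)) := by
  obtain ⟨v0, hv0⟩ := exists_low_degree T hT
  have hconn := hT.isConnected
  have hdlt : ∀ u : W, T.dist v0 u < Fintype.card W := by
    intro u
    obtain ⟨p⟩ := hconn v0 u
    have hp := p.toPath
    exact lt_of_le_of_lt (SimpleGraph.dist_le (hp : T.Walk v0 u)) hp.2.length_lt
  let f : W → Fin (Fintype.card W) := fun u => ⟨T.dist v0 u, hdlt u⟩
  have hinj : Function.Injective f := by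
    intro u w h
    have hval : T.dist v0 u = T.dist v0 w := congrArg Fin.val h
    exact dist_unique hconn hdeg hv0 (T.dist v0 u) u w rfl hval.symm
  have hbij : Function.Bijective f :=
    (Fintype.bijective_iff_injective_and_card f).mpr ⟨hinj, by simp⟩
  let e := Equiv.ofBijective f hbij
  have hval : ∀ x : W, ((e x : Fin (Fintype.card W)) : ℕ) = T.dist v0 x := fun _ => rfl
  refine ⟨⟨e, ?_⟩⟩
  intro u w
  rw [pathGraph_adj, hval, hval]
  constructor
  · rintro (h | h)
    · obtain ⟨w', hw'a, hw'd⟩ := exists_pred hconn (show T.dist v0 w = T.dist v0 u + 1 from h.symm)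
      have heq : w' = u := dist_unique hconn hdeg hv0 (T.dist v0 u) w' u hw'd rfl
      exact (heq ▸ hw'a : T.Adj u w)
    · obtain ⟨u', hu'a, hu'd⟩ := exists_pred hconn (show T.dist v0 u = T.dist v0 w + 1 from h.symm)
      have heq : u' = w := dist_unique hconn hdeg hv0 (T.dist v0 w) u' w hu'd rfl
      exact (heq ▸ hu'a : T.Adj w u).symm
  · intro h
    have hne : T.dist v0 u ≠ T.dist v0 w := by
      intro hd
      exact h.ne (dist_unique hconn hdeg hv0 (T.dist v0 u) u w rfl hd.symm)
    have h1 : T.dist v0 w ≤ T.dist v0 u + 1 := by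
      have ht := hconn.dist_triangle (u := v0) (v := u) (w := w)
      rw [SimpleGraph.dist_eq_one_iff_adj.mpr h] at ht
      exact ht
    have h2 : T.dist v0 u ≤ T.dist v0 w + 1 := by
      have ht := hconn.dist_triangle (u := v0) (v := w) (w := u)
      rw [SimpleGraph.dist_eq_one_iff_adj.mpr h.symm] at ht
      exact ht
    omega


/-- if the connected graph `G` contains no `T1`, `T2` or cycle of length
`≥ 4`, and `F` consists of exactly one edge of each triangle of `G` and nothing else,
then `G − F` is a caterpillar. -/
theorem deleteTriangleEdges_caterpillar {V : Type*} [Fintype V] [DecidableEq V]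
    (G : SimpleGraph V) [DecidableRel G.Adj] (hconn : G.Connected)
    (hT1 : ¬ ContainsSub spiderT1 G) (hT2 : ¬ ContainsSub netT2 G)
    (hcyc : ∀ k : ℕ, 4 ≤ k → ¬ ContainsSub (SimpleGraph.cycleGraph k) G)
    (F : Set (Sym2 V)) (hFE : F ⊆ G.edgeSet)
    (hFtri : ∀ e ∈ F, ∃ u v w : V, e = s(u, v) ∧ G.Adj u v ∧ G.Adj v w ∧ G.Adj u w)
    (htriF : ∀ u v w : V, G.Adj u v → G.Adj v w → G.Adj u w →
      ∃! e : Sym2 V, e ∈ ({s(u, v), s(v, w), s(u, w)} : Set (Sym2 V)) ∧ e ∈ F) :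
    IsCaterpillar (G.deleteEdges F) := by
  classical
  set G' := G.deleteEdges F with hG'
  have hGle : ∀ {u v : V}, G'.Adj u v → G.Adj u v :=
    fun h => (SimpleGraph.deleteEdges_adj.mp h).1
  have hnF : ∀ {u v : V}, G'.Adj u v → s(u, v) ∉ F :=
    fun h => (SimpleGraph.deleteEdges_adj.mp h).2
  have hmk : ∀ {u v : V}, G.Adj u v → s(u, v) ∉ F → G'.Adj u v :=
    fun h hn => SimpleGraph.deleteEdges_adj.mpr ⟨h, hn⟩
  -- every G-edge gives G'-reachability
  have hstep : ∀ {u v : V}, G.Adj u v → G'.Reachable u v := by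
    intro u v huv
    by_cases hF : s(u, v) ∈ F
    · obtain ⟨a, b, c, he, hab, hbc, hac⟩ := hFtri _ hF
      obtain ⟨e, _, huniq⟩ := htriF a b c hab hbc hac
      have h1 : s(a, b) = e := huniq s(a, b) ⟨by simp, he ▸ hF⟩
      have hbcF : s(b, c) ∉ F := by
        intro hmem
        have h2 : s(b, c) = e := huniq s(b, c) ⟨by simp, hmem⟩
        have h3 : s(a, b) = s(b, c) := h1.trans h2.symm
        rcases Sym2.eq_iff.mp h3 with ⟨h4, h5⟩ | ⟨h4, _⟩
        · exact hbc.ne (h4 ▸ h5)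
        · exact hac.ne h4
      have hacF : s(a, c) ∉ F := by
        intro hmem
        have h2 : s(a, c) = e := huniq s(a, c) ⟨by simp, hmem⟩
        have h3 : s(a, b) = s(a, c) := h1.trans h2.symm
        rcases Sym2.eq_iff.mp h3 with ⟨_, h5⟩ | ⟨h4, h5⟩
        · exact hbc.ne h5
        · exact hac.ne h4
      have r1 : G'.Adj a c := hmk hac hacF
      have r2 : G'.Adj c b := hmk hbc.symm (by rwa [Sym2.eq_swap])
      have rab : G'.Reachable a b := r1.reachable.trans r2.reachable
      rcases Sym2.eq_iff.mp he with ⟨h4, h5⟩ | ⟨h4, h5⟩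
      · rw [h4, h5]; exact rab
      · rw [h4, h5]; exact rab.symm
    · exact (hmk huv hF).reachable
  have hpre : G'.Preconnected := by
    intro u v
    obtain ⟨p⟩ := hconn.preconnected u v
    induction p with
    | nil => exact Reachable.refl _
    | cons h q ih => exact (hstep h).trans ih
  have hconn' : G'.Connected := by
    rw [connected_iff]
    exact ⟨hpre, hconn.nonempty⟩
  have hacyc : G'.IsAcyclic := by
    intro x c hc
    have h3 := hc.three_le_length
    by_cases hlen : c.length = 3
    · have adj1 : G'.Adj x (c.getVert 1) := by
        have := c.adj_getVert_succ (show 0 < c.length by omega)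
        simpa [c.getVert_zero] using this
      have adj2 : G'.Adj (c.getVert 1) (c.getVert 2) :=
        c.adj_getVert_succ (show 1 < c.length by omega)
      have adj3 : G'.Adj (c.getVert 2) x := by
        have := c.adj_getVert_succ (show 2 < c.length by omega)
        rwa [show (2 : ℕ) + 1 = c.length by omega, c.getVert_length] at this
      obtain ⟨e, ⟨hemem, heF⟩, _⟩ :=
        htriF x (c.getVert 1) (c.getVert 2) (hGle adj1) (hGle adj2) (hGle adj3.symm)
      simp only [Set.mem_insert_iff, Set.mem_singleton_iff] at hemem
      rcases hemem with rfl | rfl | rfl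
      · exact hnF adj1 heF
      · exact hnF adj2 heF
      · exact hnF adj3.symm heF
    · have hk4 : 4 ≤ c.length := by omega
      apply hcyc c.length hk4
      haveI : NeZero c.length := ⟨by omega⟩
      refine ⟨fun i => c.getVert i.val, ?_, ?_⟩
      · intro i j hij
        exact Fin.ext (cycle_getVert_inj hc i.isLt j.isLt hij)
      · have hone : ((1 : Fin c.length)).val = 1 := by
          rw [Fin.val_one']; exact Nat.mod_eq_of_lt (by omega)
        have hstepadj : ∀ i : Fin c.length,
            G.Adj (c.getVert i.val) (c.getVert (i + 1 : Fin c.length).val) := by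
          intro i
          have hval : ((i + 1 : Fin c.length)).val = (i.val + 1) % c.length := by
            rw [Fin.add_def, hone]
          by_cases hik : i.val + 1 < c.length
          · rw [hval, Nat.mod_eq_of_lt hik]
            exact hGle (c.adj_getVert_succ i.isLt)
          · have hk : i.val + 1 = c.length := by have := i.isLt; omega
            rw [hval, hk, Nat.mod_self]
            have := c.adj_getVert_succ i.isLt
            rw [hk, c.getVert_length] at this
            rw [c.getVert_zero]
            exact hGle this
        intro i j hadj
        rw [cycleGraph_adj'] at hadj
        rcases hadj with h1 | h1
        · have : i - j = 1 := Fin.ext (by rw [hone]; exact h1)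
          have hij : i = j + 1 := by
            rw [sub_eq_iff_eq_add] at this
            rw [this, add_comm]
          rw [hij]
          exact (hstepadj j).symm
        · have : j - i = 1 := Fin.ext (by rw [hone]; exact h1)
          have hij : j = i + 1 := by
            rw [sub_eq_iff_eq_add] at this
            rw [this, add_comm]
          rw [hij]
          exact hstepadj i
  unfold IsCaterpillar
  refine ⟨⟨hconn', hacyc⟩, ?_⟩
  set S : Set V := {v : V | ¬ ∃! w : V, G'.Adj v w} with hSdef
  have hSmem : ∀ {x : V}, x ∈ S ↔ ¬ ∃! w : V, G'.Adj x w := fun {x} => Iff.rfl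
  have hS2 : ∀ {x u : V}, x ∈ S → G'.Adj x u → ∃ y, G'.Adj x y ∧ y ≠ u := by
    intro x u hx hxu
    by_contra hcon
    push_neg at hcon
    exact (hSmem.mp hx) ⟨u, hxu, hcon⟩
  -- degree bound on the induced graph
  have hdegT : ∀ v : ↥S, (G'.induce S).degree v ≤ 2 := by
    intro v
    by_contra hd
    push_neg at hd
    obtain ⟨q1, q2, q3, hq1, hq2, hq3, h12, h13, h23⟩ :=
      Finset.two_lt_card_iff.mp (show 2 < ((G'.induce S).neighborFinset v).card from hd)
    rw [SimpleGraph.mem_neighborFinset] at hq1 hq2 hq3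
    have a1 : G'.Adj ↑v ↑q1 := hq1
    have a2 : G'.Adj ↑v ↑q2 := hq2
    have a3 : G'.Adj ↑v ↑q3 := hq3
    obtain ⟨r1, hr1, hr1v⟩ := hS2 q1.2 a1.symm
    obtain ⟨r2, hr2, hr2v⟩ := hS2 q2.2 a2.symm
    obtain ⟨r3, hr3, hr3v⟩ := hS2 q3.2 a3.symm
    -- distinctness facts
    have c12 : (↑q1 : V) ≠ ↑q2 := fun h => h12 (Subtype.ext h)
    have c13 : (↑q1 : V) ≠ ↑q3 := fun h => h13 (Subtype.ext h)
    have c23 : (↑q2 : V) ≠ ↑q3 := fun h => h23 (Subtype.ext h)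
    have nv1 : (↑v : V) ≠ ↑q1 := a1.ne
    have nv2 : (↑v : V) ≠ ↑q2 := a2.ne
    have nv3 : (↑v : V) ≠ ↑q3 := a3.ne
    have nq1r1 : (↑q1 : V) ≠ r1 := hr1.ne
    have nq2r2 : (↑q2 : V) ≠ r2 := hr2.ne
    have nq3r3 : (↑q3 : V) ≠ r3 := hr3.ne
    -- rᵢ ≠ qⱼ for i ≠ j (else a triangle in G')
    have hrq : ∀ {qa qb : ↥S} {ra : V}, G'.Adj ↑v ↑qa → G'.Adj ↑v ↑qb →
        G'.Adj ↑qa ra → (↑qa : V) ≠ ↑qb → ra ≠ ↑qb := by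
      intro qa qb ra ha hb hra hne h
      subst h
      exact not_acyclic_triangle ha hra hb.symm hacyc
    have n1q2 : r1 ≠ ↑q2 := hrq a1 a2 hr1 c12
    have n1q3 : r1 ≠ ↑q3 := hrq a1 a3 hr1 c13
    have n2q1 : r2 ≠ ↑q1 := hrq a2 a1 hr2 c12.symm
    have n2q3 : r2 ≠ ↑q3 := hrq a2 a3 hr2 c23
    have n3q1 : r3 ≠ ↑q1 := hrq a3 a1 hr3 c13.symm
    have n3q2 : r3 ≠ ↑q2 := hrq a3 a2 hr3 c23.symm
    -- rᵢ ≠ rⱼ for i ≠ j (else a 4-cycle in G')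
    have hrr : ∀ {qa qb : ↥S} {ra rb : V}, G'.Adj ↑v ↑qa → G'.Adj ↑v ↑qb →
        G'.Adj ↑qa ra → G'.Adj ↑qb rb → (↑qa : V) ≠ ↑qb → ra ≠ ↑v → ra ≠ rb := by
      intro qa qb ra rb ha hb hra hrb hne hrav h
      subst h
      exact not_acyclic_square ha hra hrb.symm hb.symm hrav.symm hne hacyc
    have n12 : r1 ≠ r2 := hrr a1 a2 hr1 hr2 c12 hr1v
    have n13 : r1 ≠ r3 := hrr a1 a3 hr1 hr3 c13 hr1v
    have n23 : r2 ≠ r3 := hrr a2 a3 hr2 hr3 c23 hr2v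
    -- build the spider
    apply hT1
    refine ⟨fun i => [(↑v : V), ↑q1, ↑q2, ↑q3, r1, r2, r3].get i, ?_, ?_⟩
    · intro a b hab
      fin_cases a <;> fin_cases b <;>
        first
          | rfl
          | (exfalso; revert hab;
             first
               | exact nv1 | exact nv2 | exact nv3 | exact c12 | exact c13 | exact c23
               | exact hr1v | exact hr2v | exact hr3v
               | exact nq1r1 | exact nq2r2 | exact nq3r3
               | exact n1q2 | exact n1q3 | exact n2q1 | exact n2q3 | exact n3q1 | exact n3q2
               | exact n12 | exact n13 | exact n23
               | exact nv1.symm | exact nv2.symm | exact nv3.symm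
               | exact c12.symm | exact c13.symm | exact c23.symm
               | exact hr1v.symm | exact hr2v.symm | exact hr3v.symm
               | exact nq1r1.symm | exact nq2r2.symm | exact nq3r3.symm
               | exact n1q2.symm | exact n1q3.symm | exact n2q1.symm | exact n2q3.symm
               | exact n3q1.symm | exact n3q2.symm
               | exact n12.symm | exact n13.symm | exact n23.symm)
    · intro a b hab
      have g1 : G.Adj ↑v ↑q1 := hGle a1
      have g2 : G.Adj ↑v ↑q2 := hGle a2
      have g3 : G.Adj ↑v ↑q3 := hGle a3
      have g4 : G.Adj ↑q1 r1 := hGle hr1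
      have g5 : G.Adj ↑q2 r2 := hGle hr2
      have g6 : G.Adj ↑q3 r3 := hGle hr3
      rw [spiderT1, SimpleGraph.fromEdgeSet_adj] at hab
      obtain ⟨hmem, -⟩ := hab
      simp only [Set.mem_insert_iff, Set.mem_singleton_iff, Sym2.eq_iff] at hmem
      fin_cases a <;> fin_cases b <;>
        simp only [Fin.mk.injEq] at hmem <;>
        first
          | (exfalso; revert hmem; decide)
          | exact g1 | exact g1.symm | exact g2 | exact g2.symm
          | exact g3 | exact g3.symm | exact g4 | exact g4.symm
          | exact g5 | exact g5.symm | exact g6 | exact g6.symm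
  -- every vertex of a G'-path between two S-vertices lies in S
  have hwalkS : ∀ (u w : V) (p : G'.Walk u w), p.IsPath → ∀ (hu : u ∈ S) (hw : w ∈ S),
      (G'.induce S).Reachable ⟨u, hu⟩ ⟨w, hw⟩ := by
    intro u w p
    induction p with
    | nil => intro _ hu hw; exact Reachable.refl _
    | @cons u x w hadj q ih =>
      intro hp hu hw
      have hxS : x ∈ S := by
        by_cases hx : x ∈ S
        · exact hx
        exfalso
        have hx' : ∃! y, G'.Adj x y := not_not.mp (hSmem.not.mp <| by simpa using hx)
        cases q with
        | nil => exact hx hw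
        | @cons _ y _ hadj2 q2 =>
          obtain ⟨z, _, huniq⟩ := hx'
          have h1 : u = z := huniq u hadj.symm
          have h2 : y = z := huniq y hadj2
          have hy : y ∈ (Walk.cons hadj2 q2).support := by
            simp [Walk.support_cons, Walk.start_mem_support]
          have hu' : u ∉ (Walk.cons hadj2 q2).support :=
            ((Walk.cons_isPath_iff _ _).mp hp).2
          exact hu' ((h1.trans h2.symm) ▸ hy)
      have hadjT : (G'.induce S).Adj ⟨u, hu⟩ ⟨x, hxS⟩ := hadj
      exact (hadjT.reachable).trans (ih hp.of_cons hxS hw)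
  rcases Set.eq_empty_or_nonempty S with hSe | hSne
  · haveI : IsEmpty ↥S := Set.isEmpty_coe_sort.mpr hSe
    exact ⟨0, ⟨⟨Equiv.equivOfIsEmpty _ _, fun {a b} => isEmptyElim a⟩⟩⟩
  · haveI : Nonempty ↥S := hSne.to_subtype
    have hTconn : (G'.induce S).Connected := by
      rw [connected_iff]
      refine ⟨?_, inferInstance⟩
      rintro ⟨a, ha⟩ ⟨b, hb⟩
      obtain ⟨p⟩ := hpre a b
      exact hwalkS a b p.toPath p.toPath.2 ha hb
    have hTacyc : (G'.induce S).IsAcyclic := by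
      intro y c hc
      exact hacyc _ (hc.map (f := (SimpleGraph.Embedding.induce (G := G') S).toHom)
        (SimpleGraph.Embedding.induce (G := G') S).injective)
    obtain ⟨iso⟩ := path_iso (G'.induce S) ⟨hTconn, hTacyc⟩ hdegT
    exact ⟨Fintype.card ↥S, ⟨iso⟩⟩
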